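/- For f ∈ ℝ³ with 0 < |f| ≤ 1, the Eddington tensor D(f) = ((1-χ(|f|))/2) I + ((3χ(|f|)-1)/2) (f⊗f)/|f|² is symmetric positive semidefinite, with eigenvalues (1-χ(|f|))/2 (double) and χ(|f|) (simple). -/

import Mathlib

open Matrix

lemma edd_aux (f : EuclideanSpace ℝ (Fin 3)) :
    (f : Fin 3 → ℝ) ⬝ᵥ (f : Fin 3 → ℝ) = ‖f‖ ^ 2 := by
  rw [EuclideanSpace.norm_eq, Real.sq_sqrt (by positivity)]
  simp [dotProduct, Real.norm_eq_abs, sq_abs, sq]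

/-- The M₁ Eddington tensor `D(f) = ((1-χ)/2) I + ((3χ-1)/2)(f fᵀ)/|f|²` is symmetric
positive semidefinite, with eigenvalue `(1-χ)/2` on the plane orthogonal to `f` (double)
and eigenvalue `χ` in the direction `f` (simple). -/
theorem eddington_tensor_posSemidef (f : EuclideanSpace ℝ (Fin 3))
    (hf0 : f ≠ 0) (hf1 : ‖f‖ ≤ 1)
    (χ : ℝ) (hχ : χ = (1 / 3) * (5 - 2 * Real.sqrt (4 - 3 * ‖f‖ ^ 2)))
    (D : Matrix (Fin 3) (Fin 3) ℝ)
    (hD : D = ((1 - χ) / 2) • (1 : Matrix (Fin 3) (Fin 3) ℝ) +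
        ((3 * χ - 1) / (2 * ‖f‖ ^ 2)) • Matrix.vecMulVec (f : Fin 3 → ℝ) (f : Fin 3 → ℝ)) :
    D.PosSemidef ∧
    D.mulVec (f : Fin 3 → ℝ) = χ • (f : Fin 3 → ℝ) ∧
    ∀ x : Fin 3 → ℝ, (f : Fin 3 → ℝ) ⬝ᵥ x = 0 → D.mulVec x = ((1 - χ) / 2) • x := by
  have hn : (0:ℝ) < ‖f‖ := norm_pos_iff.mpr hf0
  have hn2 : (0:ℝ) < ‖f‖ ^ 2 := by positivity
  have ht1 : ‖f‖ ^ 2 ≤ 1 := by nlinarith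
  have hs1 : (1:ℝ) ≤ Real.sqrt (4 - 3 * ‖f‖ ^ 2) := by
    rw [show (1:ℝ) = Real.sqrt 1 by simp]
    exact Real.sqrt_le_sqrt (by nlinarith)
  have hs2 : Real.sqrt (4 - 3 * ‖f‖ ^ 2) ≤ 2 := by
    rw [show (2:ℝ) = Real.sqrt 4 by
      rw [show (4:ℝ) = 2^2 by norm_num, Real.sqrt_sq]; norm_num]
    exact Real.sqrt_le_sqrt (by nlinarith)
  have hχ1 : (1:ℝ)/3 ≤ χ := by rw [hχ]; linarith
  have hχ2 : χ ≤ 1 := by rw [hχ]; linarith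
  have ha : (0:ℝ) ≤ (1 - χ) / 2 := by linarith
  have hb : (0:ℝ) ≤ (3 * χ - 1) / (2 * ‖f‖ ^ 2) :=
    div_nonneg (by linarith) (by positivity)
  have hff := edd_aux f
  have hmul : ∀ (x : Fin 3 → ℝ) (i : Fin 3), D.mulVec x i =
      ((1 - χ) / 2) * x i + (((3 * χ - 1) / (2 * ‖f‖ ^ 2)) * ((f : Fin 3 → ℝ) ⬝ᵥ x))
        * (f : Fin 3 → ℝ) i := by
    intro x i
    have hv : (Matrix.vecMulVec (f : Fin 3 → ℝ) (f : Fin 3 → ℝ)).mulVec x i =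
        ((f : Fin 3 → ℝ) ⬝ᵥ x) * (f : Fin 3 → ℝ) i := by
      simp only [Matrix.mulVec, Matrix.vecMulVec_apply, dotProduct, Finset.sum_mul]
      apply Finset.sum_congr rfl
      intros; ring
    simp only [hD, Matrix.add_mulVec, Matrix.smul_mulVec, Matrix.one_mulVec,
      Pi.add_apply, Pi.smul_apply, smul_eq_mul, hv]
    ring
  refine ⟨Matrix.posSemidef_iff_dotProduct_mulVec.mpr ⟨?_, ?_⟩, ?_, ?_⟩
  · show Dᴴ = D
    rw [hD]
    ext i j
    simp only [Matrix.conjTranspose_apply, Matrix.add_apply, Matrix.smul_apply,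
      Matrix.one_apply, Matrix.vecMulVec_apply, smul_eq_mul, star_trivial]
    rcases eq_or_ne i j with h | h
    · subst h; ring
    · simp only [if_neg h, if_neg (Ne.symm h)]; ring
  · intro x
    have hq : (star x) ⬝ᵥ (D.mulVec x) =
        ((1 - χ) / 2) * (x ⬝ᵥ x) +
          ((3 * χ - 1) / (2 * ‖f‖ ^ 2)) * ((f : Fin 3 → ℝ) ⬝ᵥ x) ^ 2 := by
      simp only [dotProduct, Pi.star_apply, star_trivial, hmul, Fin.sum_univ_three]
      ring
    rw [hq]
    have hxx : (0:ℝ) ≤ x ⬝ᵥ x := Finset.sum_nonneg fun i _ => mul_self_nonneg _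
    have h1 := mul_nonneg ha hxx
    have h2 := mul_nonneg hb (sq_nonneg ((f : Fin 3 → ℝ) ⬝ᵥ x))
    linarith
  · funext i
    rw [hmul, hff]
    simp only [Pi.smul_apply, smul_eq_mul]
    field_simp
    ring
  · intro x hx
    funext i
    rw [hmul, hx]
    simp
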